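/- If f : ℂ → ℂ is entire, not identically zero, satisfies f(z+1)=f(z) and f(z+τ)=(−1)^n e^{−2πi(nz−c)} f(z) (Im τ > 0, n ≥ 1), and z₁,…,z_n are its zeros in a fundamental parallelogram counted with multiplicity, then z₁ + ⋯ + z_n ≡ c (mod ℤ + ℤτ). -/

import Mathlib

open Complex

open Filter Topology MeasureTheory


private lemma analyticOnNhd_univ_of {φ : ℂ → ℂ} (hφ : ∀ z, AnalyticAt ℂ φ z) :
    AnalyticOnNhd ℂ φ Set.univ := fun z _ => hφ z

/-- no zero divisors among entire functions -/
private lemma entire_mul_eq_zero {φ ψ : ℂ → ℂ} (hφ : ∀ z, AnalyticAt ℂ φ z)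
    (hψ : ∀ z, AnalyticAt ℂ ψ z) (h : ∀ z, φ z * ψ z = 0) (hψ0 : ∃ z, ψ z ≠ 0) : ∀ z, φ z = 0 := by
  obtain ⟨z₁, hz₁⟩ := hψ0
  have hcont : ContinuousAt ψ z₁ := (hψ z₁).continuousAt
  have hev : ∀ᶠ z in 𝓝 z₁, ψ z ≠ 0 := hcont.eventually_ne hz₁
  have hev0 : φ =ᶠ[𝓝 z₁] 0 := by
    filter_upwards [hev] with z hz
    have := h z
    simpa [hz] using mul_eq_zero.mp this
  intro z
  exact (analyticOnNhd_univ_of hφ).eqOn_zero_of_preconnected_of_eventuallyEq_zero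
    isPreconnected_univ (Set.mem_univ z₁) hev0 (Set.mem_univ z)

private lemma order_ne_top {φ : ℂ → ℂ} (hφ : ∀ z, AnalyticAt ℂ φ z)
    (h0 : ∃ z, φ z ≠ 0) (w : ℂ) : analyticOrderAt φ w ≠ ⊤ := by
  intro htop
  obtain ⟨z, hz⟩ := h0
  have hev : ∀ᶠ z in 𝓝 w, φ z = 0 := analyticOrderAt_eq_top.mp htop
  exact hz <| (analyticOnNhd_univ_of hφ).eqOn_zero_of_preconnected_of_eventuallyEq_zero
    isPreconnected_univ (Set.mem_univ w) hev (Set.mem_univ z)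

private lemma order_factor {φ : ℂ → ℂ} (hφ : ∀ z, AnalyticAt ℂ φ z)
    (h0 : ∃ z, φ z ≠ 0) (w : ℂ) : ∃ g : ℂ → ℂ, AnalyticAt ℂ g w ∧ g w ≠ 0 ∧
      ∀ᶠ z in 𝓝 w, φ z = (z - w) ^ ((analyticOrderAt φ w).toNat) * g z := by
  have h1 : analyticOrderAt φ w = ((analyticOrderAt φ w).toNat : ℕ) := (ENat.coe_toNat (order_ne_top hφ h0 w)).symm
  obtain ⟨g, hg, hgw, hev⟩ := ((hφ w).analyticOrderAt_eq_natCast).mp h1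
  exact ⟨g, hg, hgw, by simpa [smul_eq_mul] using hev⟩

private lemma order_pos {φ : ℂ → ℂ} (hφ : ∀ z, AnalyticAt ℂ φ z)
    (h0 : ∃ z, φ z ≠ 0) (w : ℂ) (hw : φ w = 0) : 1 ≤ (analyticOrderAt φ w).toNat := by
  by_contra h
  push_neg at h
  interval_cases h' : (analyticOrderAt φ w).toNat
  obtain ⟨g, hg, hgw, hev⟩ := order_factor hφ h0 w
  rw [h'] at hev
  have := hev.self_of_nhds
  simp only [pow_zero, one_mul] at this
  exact hgw (this ▸ hw)

private lemma lattice_decomp {τ : ℂ} (hτ : 0 < τ.im) (z₀ z : ℂ) :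
    ∃ (a b : ℤ) (s t : ℝ), 0 ≤ s ∧ s < 1 ∧ 0 ≤ t ∧ t < 1 ∧
      z = (z₀ + s + t * τ) + ((a : ℂ) + (b : ℂ) * τ) := by
  set y : ℝ := (z - z₀).im / τ.im with hy
  set x : ℝ := (z - z₀).re - y * τ.re with hx
  have hdec : z - z₀ = (x : ℂ) + (y : ℂ) * τ := by
    apply Complex.ext
    · simp [hx]
    · simp [hy, div_mul_cancel₀ _ (ne_of_gt hτ)]
  refine ⟨⌊x⌋, ⌊y⌋, Int.fract x, Int.fract y, Int.fract_nonneg x, Int.fract_lt_one x,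
    Int.fract_nonneg y, Int.fract_lt_one y, ?_⟩
  have hxx : ((⌊x⌋ : ℝ) : ℂ) + ((Int.fract x : ℝ) : ℂ) = (x : ℂ) := by
    rw [← Complex.ofReal_add, Int.floor_add_fract]
  have hyy : ((⌊y⌋ : ℝ) : ℂ) + ((Int.fract y : ℝ) : ℂ) = (y : ℂ) := by
    rw [← Complex.ofReal_add, Int.floor_add_fract]
  have hz : z = z₀ + ((x : ℂ) + (y : ℂ) * τ) := by rw [← hdec]; ring
  rw [hz, ← hxx, ← hyy]
  push_cast
  ring

private lemma per_int {α : Type*} {c : ℂ} {g : ℂ → α} (hg : ∀ z, g (z + c) = g z) :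
    ∀ (a : ℤ) (z : ℂ), g (z + (a : ℂ) * c) = g z := by
  intro a
  induction a using Int.induction_on with
  | zero => simp
  | succ k ih =>
      intro z
      have h1 : z + ((((k : ℤ) + 1 : ℤ)) : ℂ) * c = (z + (k : ℤ) * c) + c := by push_cast; ring
      rw [h1, hg, ih]
  | pred k ih =>
      intro z
      have h1 : z + ((((-(k : ℤ) - 1 : ℤ))) : ℂ) * c + c = z + ((-(k : ℤ) : ℤ) : ℂ) * c := by
        push_cast; ring
      rw [← ih z, ← h1, hg]

private lemma int_per {g : ℂ → ℂ} (hg1 : ∀ z, g (z + 1) = g z) :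
    ∀ (a : ℤ) (z : ℂ), g (z + (a : ℂ)) = g z := by
  intro a z
  have := per_int hg1 a z
  rwa [mul_one] at this

private lemma lat_unit {τ : ℂ} {g : ℂ → ℂ} (hg1 : ∀ z, g (z + 1) = g z)
    {A : ℂ → ℂ} (hA : Differentiable ℂ A) (hA0 : ∀ z, A z ≠ 0)
    (hgτ : ∀ z, g (z + τ) = A z * g z) (a b : ℤ) :
    ∃ u : ℂ → ℂ, Differentiable ℂ u ∧ (∀ z, u z ≠ 0) ∧
      ∀ z, g (z + ((a : ℂ) + (b : ℂ) * τ)) = u z * g z := by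
  induction b using Int.induction_on with
  | zero =>
      refine ⟨fun _ => 1, differentiable_const 1, fun z => one_ne_zero, fun z => ?_⟩
      have := int_per hg1 a z
      simpa using this
  | succ k ih =>
      obtain ⟨u, hu, hu0, hrel⟩ := ih
      refine ⟨fun z => A (z + ((a : ℂ) + ((k : ℤ) : ℂ) * τ)) * u z,
        (hA.comp (differentiable_id.add_const _)).mul hu,
        fun z => mul_ne_zero (hA0 _) (hu0 z), fun z => ?_⟩
      have h1 := hgτ (z + ((a : ℂ) + ((k : ℤ) : ℂ) * τ))
      have h2 : z + (((((k : ℤ) + 1 : ℤ)) : ℂ) * τ + (a : ℂ)) =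
          z + ((a : ℂ) + ((k : ℤ) : ℂ) * τ) + τ := by push_cast; ring
      calc g (z + ((a : ℂ) + (((k : ℤ) + 1 : ℤ) : ℂ) * τ))
          = g (z + ((a : ℂ) + ((k : ℤ) : ℂ) * τ) + τ) := by rw [← h2]; ring_nf
        _ = A (z + ((a : ℂ) + ((k : ℤ) : ℂ) * τ)) * g (z + ((a : ℂ) + ((k : ℤ) : ℂ) * τ)) := h1
        _ = A (z + ((a : ℂ) + ((k : ℤ) : ℂ) * τ)) * (u z * g z) := by rw [hrel z]
        _ = A (z + ((a : ℂ) + ((k : ℤ) : ℂ) * τ)) * u z * g z := by ring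
  | pred k ih =>
      obtain ⟨u, hu, hu0, hrel⟩ := ih
      refine ⟨fun z => (A (z + ((a : ℂ) + ((-(k : ℤ) - 1 : ℤ) : ℂ) * τ)))⁻¹ * u z,
        ((hA.comp (differentiable_id.add_const _)).inv (fun z => hA0 _)).mul hu,
        fun z => mul_ne_zero (inv_ne_zero (hA0 _)) (hu0 z), fun z => ?_⟩
      have h1 := hgτ (z + ((a : ℂ) + ((-(k : ℤ) - 1 : ℤ) : ℂ) * τ))
      have h2 : z + ((a : ℂ) + ((-(k : ℤ) - 1 : ℤ) : ℂ) * τ) + τ =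
          z + ((a : ℂ) + ((-(k : ℤ) : ℤ) : ℂ) * τ) := by push_cast; ring
      rw [h2, hrel z] at h1
      rw [mul_assoc, h1, inv_mul_cancel_left₀ (hA0 _)]

private lemma order_transfer {g : ℂ → ℂ} (hg : ∀ z, AnalyticAt ℂ g z) (h0 : ∃ z, g z ≠ 0)
    {u : ℂ → ℂ} (hu : Differentiable ℂ u) (hu0 : ∀ z, u z ≠ 0) {ω : ℂ}
    (hrel : ∀ z, g (z + ω) = u z * g z) (w : ℂ) :
    (analyticOrderAt g (w + ω)).toNat = (analyticOrderAt g w).toNat := by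
  obtain ⟨γ, hγ, hγ0, hev⟩ := order_factor hg h0 w
  set m := (analyticOrderAt g w).toNat with hm
  have hordeq : analyticOrderAt g (w + ω) = (m : ℕ) := by
    rw [(hg (w + ω)).analyticOrderAt_eq_natCast]
    refine ⟨fun ζ => u (ζ - ω) * γ (ζ - ω), ?_, ?_, ?_⟩
    · have h6 : AnalyticAt ℂ (fun ζ : ℂ => ζ - ω) (w + ω) := analyticAt_id.sub analyticAt_const
      have h5 : AnalyticAt ℂ γ ((fun ζ : ℂ => ζ - ω) (w + ω)) := by simpa using hγ
      have h7 : AnalyticAt ℂ (γ ∘ fun ζ : ℂ => ζ - ω) (w + ω) := AnalyticAt.comp (f := fun ζ : ℂ => ζ - ω) h5 h6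
      have h5' : AnalyticAt ℂ u ((fun ζ : ℂ => ζ - ω) (w + ω)) := hu.analyticAt _
      have h8 : AnalyticAt ℂ (u ∘ fun ζ : ℂ => ζ - ω) (w + ω) := AnalyticAt.comp (f := fun ζ : ℂ => ζ - ω) h5' h6
      exact h8.mul h7
    · simp only [add_sub_cancel_right]
      exact mul_ne_zero (hu0 w) hγ0
    · have hcont : Filter.Tendsto (fun ζ : ℂ => ζ - ω) (𝓝 (w + ω)) (𝓝 (w + ω - ω)) :=
        (continuous_id.sub continuous_const).continuousAt
      have hev' : ∀ᶠ z in 𝓝 (w + ω - ω), g z = (z - w) ^ m * γ z := by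
        simpa [add_sub_cancel_right] using hev
      have hevv : ∀ᶠ ζ in 𝓝 (w + ω), g (ζ - ω) = (ζ - ω - w) ^ m * γ (ζ - ω) :=
        hcont.eventually hev'
      filter_upwards [hevv] with ζ hζ
      have h1 := hrel (ζ - ω)
      rw [sub_add_cancel] at h1
      rw [h1, hζ, smul_eq_mul]
      ring_nf
  rw [hordeq, ENat.toNat_coe]

private lemma theta_entire {τ : ℂ} (hτ : 0 < τ.im) :
    ∀ z, AnalyticAt ℂ (fun z => jacobiTheta₂ z τ) z := by
  have hD : Differentiable ℂ (fun z => jacobiTheta₂ z τ) :=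
    fun z => differentiableAt_jacobiTheta₂_fst z hτ
  exact fun z => hD.analyticAt z

private lemma theta_zero {τ : ℂ} : jacobiTheta₂ ((1 + τ) / 2) τ = 0 := by
  set p : ℂ := (1 + τ) / 2 with hp
  have h1 := jacobiTheta₂_add_left' (-p + 1) τ
  have h2 : (-p + 1) + τ = p := by rw [hp]; ring
  have h3 : jacobiTheta₂ (-p + 1) τ = jacobiTheta₂ p τ := by
    rw [jacobiTheta₂_add_left, jacobiTheta₂_neg_left]
  rw [h2, h3] at h1
  have h4 : Complex.exp (-↑Real.pi * I * (τ + 2 * (-p + 1))) = -1 := by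
    have he : -↑Real.pi * I * (τ + 2 * (-p + 1)) = -(↑Real.pi * I) := by rw [hp]; ring
    rw [he, Complex.exp_neg, Complex.exp_pi_mul_I]
    norm_num
  rw [h4] at h1
  linear_combination h1 / 2

private lemma theta_ne {τ : ℂ} (hτ : 0 < τ.im) : ∃ z : ℂ, jacobiTheta₂ z τ ≠ 0 := by
  by_contra hcon
  push_neg at hcon
  have key : (∫ t in Set.Ioc (0:ℝ) 1, jacobiTheta₂ (t:ℂ) τ) = 1 := by
    have hcontF : ∀ n : ℤ, Continuous (fun t : ℝ => jacobiTheta₂_term n (t:ℂ) τ) := by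
      intro n
      unfold jacobiTheta₂_term
      fun_prop
    have hint : ∀ n : ℤ, MeasureTheory.Integrable (fun t : ℝ => jacobiTheta₂_term n (t:ℂ) τ)
        (MeasureTheory.volume.restrict (Set.Ioc (0:ℝ) 1)) := fun n =>
      (hcontF n).integrableOn_Ioc
    have hnorm : ∀ (n : ℤ) (t : ℝ), ‖jacobiTheta₂_term n (t:ℂ) τ‖ =
        Real.exp (-Real.pi * n ^ 2 * τ.im) := by
      intro n t
      rw [norm_jacobiTheta₂_term]
      norm_num
    have hsum : Summable fun n : ℤ =>
        ∫ t in Set.Ioc (0:ℝ) 1, ‖jacobiTheta₂_term n (t:ℂ) τ‖ := by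
      have hb := summable_pow_mul_jacobiTheta₂_term_bound 0 hτ 0
      simp only [pow_zero, one_mul, mul_zero, zero_mul, sub_zero] at hb
      apply hb.congr
      intro n
      simp only [hnorm n]
      rw [MeasureTheory.integral_const]
      simp [Real.volume_Ioc]
      ring_nf
    have hswap := MeasureTheory.integral_tsum_of_summable_integral_norm hint hsum
    have hthetasum : ∀ t : ℝ, (∑' n : ℤ, jacobiTheta₂_term n (t:ℂ) τ) = jacobiTheta₂ (t:ℂ) τ :=
      fun t => (hasSum_jacobiTheta₂_term (t:ℂ) hτ).tsum_eq
    have hterm : ∀ n : ℤ, (∫ t in Set.Ioc (0:ℝ) 1, jacobiTheta₂_term n (t:ℂ) τ) =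
        if n = 0 then 1 else 0 := by
      intro n
      have hIoc : (∫ t in Set.Ioc (0:ℝ) 1, jacobiTheta₂_term n (t:ℂ) τ)
          = ∫ t in (0:ℝ)..1, jacobiTheta₂_term n (t:ℂ) τ := by
        rw [intervalIntegral.integral_of_le (by norm_num : (0:ℝ) ≤ 1)]
      rcases eq_or_ne n 0 with hn | hn
      · subst hn
        rw [hIoc]
        have hone : ∀ t : ℝ, jacobiTheta₂_term 0 (t:ℂ) τ = 1 := by
          intro t; simp [jacobiTheta₂_term]
        rw [intervalIntegral.integral_congr (fun t _ => hone t)]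
        simp
      · rw [hIoc]
        have heq : ∀ t : ℝ, jacobiTheta₂_term n (t:ℂ) τ =
            Complex.exp (Real.pi * I * n ^ 2 * τ) * Complex.exp ((2 * Real.pi * I * n) * t) := by
          intro t
          rw [jacobiTheta₂_term, ← Complex.exp_add]
          ring_nf
        rw [intervalIntegral.integral_congr (fun t _ => heq t)]
        rw [intervalIntegral.integral_const_mul]
        have hc : (2 * (Real.pi : ℂ) * I * n) ≠ 0 := by
          simp [Real.pi_ne_zero, Complex.I_ne_zero, Complex.ofReal_ne_zero, hn]
        rw [integral_exp_mul_complex hc]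
        have e1 : Complex.exp (2 * (Real.pi:ℂ) * I * (n:ℂ) * ((1:ℝ):ℂ)) = 1 := by
          rw [show 2 * (Real.pi:ℂ) * I * (n:ℂ) * ((1:ℝ):ℂ) = (n:ℂ) * (2 * Real.pi * I) by
            push_cast; ring]
          exact Complex.exp_int_mul_two_pi_mul_I n
        have e2 : Complex.exp (2 * (Real.pi:ℂ) * I * (n:ℂ) * ((0:ℝ):ℂ)) = 1 := by
          norm_num
        rw [e1, e2]
        simp [hn]
    calc (∫ t in Set.Ioc (0:ℝ) 1, jacobiTheta₂ (t:ℂ) τ)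
        = ∫ t in Set.Ioc (0:ℝ) 1, (∑' n : ℤ, jacobiTheta₂_term n (t:ℂ) τ) := by
          apply MeasureTheory.setIntegral_congr_fun measurableSet_Ioc
          intro t _
          exact (hthetasum t).symm
      _ = ∑' n : ℤ, ∫ t in Set.Ioc (0:ℝ) 1, jacobiTheta₂_term n (t:ℂ) τ := hswap.symm
      _ = ∑' n : ℤ, if n = 0 then (1:ℂ) else 0 := by
          exact tsum_congr hterm
      _ = 1 := by rw [tsum_ite_eq]
  have hzero : (∫ t in Set.Ioc (0:ℝ) 1, jacobiTheta₂ (t:ℂ) τ) = 0 := by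
    simp [hcon]
  rw [hzero] at key
  exact one_ne_zero key.symm

private lemma claimB {τ : ℂ} (hτ : 0 < τ.im) {h : ℂ → ℂ} (hh : ∀ z, AnalyticAt ℂ h z)
    (h0 : ∃ z, h z ≠ 0) {ν : ℂ} (hper : ∀ z, h (z + 1) = h z)
    (hq : ∀ z, h (z + τ) = Complex.exp (2 * Real.pi * I * ν) * h z) :
    ∃ a b : ℤ, ν = (a : ℂ) + (b : ℂ) * τ := by
  set b : ℝ := 2 * Real.pi * ν.im / τ.im with hb
  have hbτ : b * τ.im = 2 * Real.pi * ν.im := by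
    rw [hb]; field_simp
  have hediff : Differentiable ℂ (fun z : ℂ => Complex.exp (-(I * b * z))) := by
    apply Complex.differentiable_exp.comp
    fun_prop
  set k : ℂ → ℂ := fun z => h z * Complex.exp (-(I * b * z)) with hk
  have hkdiff : Differentiable ℂ k := fun z => ((hh z).differentiableAt).mul (hediff z)
  have N1 : ∀ z, ‖k (z + 1)‖ = ‖k z‖ := by
    intro z
    have : k (z + 1) = k z * Complex.exp (-(I * b)) := by
      rw [hk]; simp only [hper]
      rw [show -(I * b * (z+1)) = -(I * b * z) + -(I * b) by ring, Complex.exp_add]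
      ring
    have hfac : ‖Complex.exp (-(I * (b:ℂ)))‖ = 1 := by
      rw [Complex.norm_exp]
      simp
    rw [this, norm_mul, hfac, mul_one]
  have Nτ : ∀ z, ‖k (z + τ)‖ = ‖k z‖ := by
    intro z
    have : k (z + τ) = k z * (Complex.exp (2 * Real.pi * I * ν) * Complex.exp (-(I * b * τ))) := by
      rw [hk]; simp only [hq]
      rw [show -(I * b * (z+τ)) = -(I * b * z) + -(I * b * τ) by ring, Complex.exp_add]
      ring
    have hfac : ‖Complex.exp (2 * Real.pi * I * ν) * Complex.exp (-(I * (b:ℂ) * τ))‖ = 1 := by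
      rw [← Complex.exp_add, Complex.norm_exp]
      have hre : (2 * (Real.pi:ℂ) * I * ν + -(I * (b:ℂ) * τ)).re = 0 := by
        have hre1 : (2 * (Real.pi:ℂ) * I * ν).re = -(2 * Real.pi * ν.im) := by
          simp [Complex.mul_re, Complex.mul_im]
          try ring
        have hre2 : (-(I * (b:ℂ) * τ)).re = b * τ.im := by
          simp [Complex.mul_re, Complex.mul_im]
        rw [Complex.add_re, hre1, hre2, hbτ]; ring
      rw [hre, Real.exp_zero]
    rw [this, norm_mul, hfac, mul_one]
  have Nlat : ∀ (a b' : ℤ) (z : ℂ), ‖k (z + ((a : ℂ) + (b' : ℂ) * τ))‖ = ‖k z‖ := by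
    intro a b' z
    have h1 := per_int (g := fun z => ‖k z‖) (c := τ) Nτ b' (z + (a : ℂ))
    have h2 : ‖k (z + (a:ℂ))‖ = ‖k z‖ := by
      have := per_int (g := fun z => ‖k z‖) (c := (1:ℂ)) N1 a z
      rwa [mul_one] at this
    calc ‖k (z + ((a : ℂ) + (b' : ℂ) * τ))‖
        = ‖k (z + (a : ℂ) + (b' : ℂ) * τ)‖ := by ring_nf
      _ = ‖k (z + (a : ℂ))‖ := h1
      _ = ‖k z‖ := h2
  -- boundedness
  set K : Set ℂ := (fun p : ℝ × ℝ => ((p.1 : ℂ) + (p.2 : ℂ) * τ)) ''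
    (Set.Icc 0 1 ×ˢ Set.Icc 0 1) with hK
  have hKcpt : IsCompact K := by
    apply (isCompact_Icc.prod isCompact_Icc).image
    fun_prop
  obtain ⟨C, hC⟩ := hKcpt.exists_bound_of_continuousOn (hkdiff.continuous.continuousOn)
  have hbdd : ∀ z, ‖k z‖ ≤ C := by
    intro z
    obtain ⟨a, b', s, t, hs0, hs1, ht0, ht1, hzeq⟩ := lattice_decomp hτ 0 z
    have hmem : ((s : ℂ) + (t : ℂ) * τ) ∈ K := by
      exact ⟨(s, t), ⟨⟨hs0, hs1.le⟩, ⟨ht0, ht1.le⟩⟩, rfl⟩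
    have : ‖k z‖ = ‖k ((s : ℂ) + (t : ℂ) * τ)‖ := by
      rw [hzeq, show (0 : ℂ) + s + t * τ = (s : ℂ) + (t : ℂ) * τ by ring]
      exact Nlat a b' _
    rw [this]
    exact hC _ hmem
  have hrange : Bornology.IsBounded (Set.range k) := by
    rw [isBounded_iff_forall_norm_le]
    exact ⟨C, by rintro x ⟨z, rfl⟩; exact hbdd z⟩
  have hconst : ∀ z, k z = k 0 := fun z =>
    hkdiff.apply_eq_apply_of_bounded hrange z 0
  have hform : ∀ z, h z = h 0 * Complex.exp (I * b * z) := by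
    intro z
    have h1 := hconst z
    rw [hk] at h1
    simp only at h1
    have h2 : Complex.exp (-(I * b * (0:ℂ))) = 1 := by norm_num
    rw [h2, mul_one] at h1
    have h3 : Complex.exp (-(I * b * z)) * Complex.exp (I * b * z) = 1 := by
      rw [← Complex.exp_add]; norm_num
    calc h z = h z * (Complex.exp (-(I * b * z)) * Complex.exp (I * b * z)) := by
          rw [h3, mul_one]
      _ = (h z * Complex.exp (-(I * b * z))) * Complex.exp (I * b * z) := by ring
      _ = h 0 * Complex.exp (I * b * z) := by rw [h1]
  have hh0 : h 0 ≠ 0 := by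
    intro hcon
    obtain ⟨z, hz⟩ := h0
    exact hz (by rw [hform z, hcon, zero_mul])
  -- from period 1
  have hexp1 : Complex.exp (I * b) = 1 := by
    have h1 := hper 0
    rw [zero_add, hform 1, hform 0] at h1
    simp only [mul_one, mul_zero, Complex.exp_zero] at h1
    exact mul_left_cancel₀ hh0 (h1.trans (mul_one (h 0)).symm)
  obtain ⟨m, hm⟩ := Complex.exp_eq_one_iff.mp hexp1
  have hbm : (b : ℂ) = 2 * Real.pi * m := by
    have : I * (b : ℂ) = I * (2 * Real.pi * m) := by
      rw [hm]; ring
    exact mul_left_cancel₀ Complex.I_ne_zero this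
  -- from quasi-period τ
  have hexp2 : Complex.exp (I * b * τ - 2 * Real.pi * I * ν) = 1 := by
    have h1 := hq 0
    rw [zero_add, hform τ, hform 0] at h1
    simp only [mul_zero, Complex.exp_zero, mul_one] at h1
    have h2 : Complex.exp (I * b * τ) = Complex.exp (2 * Real.pi * I * ν) := by
      apply mul_left_cancel₀ hh0
      calc h 0 * Complex.exp (I * b * τ) = Complex.exp (2 * Real.pi * I * ν) * h 0 := by
            linear_combination h1
        _ = h 0 * Complex.exp (2 * Real.pi * I * ν) := by ring
    rw [Complex.exp_sub, h2, div_self (Complex.exp_ne_zero _)]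
  obtain ⟨j, hj⟩ := Complex.exp_eq_one_iff.mp hexp2
  refine ⟨-j, m, ?_⟩
  have hπI : (2 * (Real.pi : ℂ) * I) ≠ 0 := by
    simp [Real.pi_ne_zero, Complex.I_ne_zero]
  have : 2 * (Real.pi:ℂ) * I * ν = 2 * (Real.pi:ℂ) * I * ((-j : ℤ) + (m:ℂ) * τ) := by
    push_cast
    rw [hbm] at hj
    linear_combination -hj
  exact mul_left_cancel₀ hπI this


open Filter Topology MeasureTheory

/-- The open fundamental parallelogram `{z₀ + s + tτ : 0 ≤ s,t < 1}` for the lattice `ℤ + ℤτ`. -/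
def fundPar (τ z₀ : ℂ) : Set ℂ :=
  {z | ∃ s t : ℝ, 0 ≤ s ∧ s < 1 ∧ 0 ≤ t ∧ t < 1 ∧ z = z₀ + s + t * τ}

/-- For `f ∈ Θ_{n,c}(τ)`, not identically zero, the sum of the zeros of `f` in a fundamental
parallelogram (whose boundary avoids zeros of `f`), counted with multiplicity, is congruent
to `c` modulo the lattice `ℤ + ℤτ`. -/
theorem stmt_6 (τ : ℂ) (hτ : 0 < τ.im) (n : ℕ) (hn : 1 ≤ n) (c : ℂ)
    (f : ℂ → ℂ) (hf : ∀ z, AnalyticAt ℂ f z)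
    (hper1 : ∀ z, f (z + 1) = f z)
    (hperτ : ∀ z, f (z + τ) =
      (-1 : ℂ) ^ n * Complex.exp (-2 * Real.pi * Complex.I * (n * z - c)) * f z)
    (hne : f ≠ 0)
    (z₀ : ℂ)
    (hbd : ∀ s t : ℝ, s ∈ Set.Icc (0:ℝ) 1 → t ∈ Set.Icc (0:ℝ) 1 →
      (s = 0 ∨ s = 1 ∨ t = 0 ∨ t = 1) → f (z₀ + s + t * τ) ≠ 0)
    (Z : Finset ℂ) (hZ : ↑Z = {z ∈ fundPar τ z₀ | f z = 0})
    (hcount : ∑ z ∈ Z, (analyticOrderAt f z).toNat = n) :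
    ∃ a b : ℤ, ∑ z ∈ Z, ((analyticOrderAt f z).toNat : ℂ) * z = c + a + b * τ := by
  classical
  have hfne : ∃ z, f z ≠ 0 := by
    by_contra hcon
    push_neg at hcon
    exact hne (funext fun z => hcon z)
  let m : ℂ → ℕ := fun w => (analyticOrderAt f w).toNat
  let p : ℂ := (1 + τ) / 2
  let θ : ℂ → ℂ := fun z => jacobiTheta₂ z τ
  have hθa : ∀ z, AnalyticAt ℂ θ z := theta_entire hτ
  have hθne : ∃ z, θ z ≠ 0 := theta_ne hτ
  have hθ1 : ∀ z, θ (z + 1) = θ z := fun z => jacobiTheta₂_add_left z τ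
  have hθτ : ∀ z, θ (z + τ) = Complex.exp (-(Real.pi:ℂ) * I * (τ + 2 * z)) * θ z :=
    fun z => jacobiTheta₂_add_left' z τ
  have hθp : θ p = 0 := theta_zero
  let A : ℂ → ℂ := fun z => (-1:ℂ)^n * Complex.exp (-2 * Real.pi * I * (n * z - c))
  have hAdiff : Differentiable ℂ A := by
    apply Differentiable.const_mul
    apply Complex.differentiable_exp.comp
    fun_prop
  have hA0 : ∀ z, A z ≠ 0 := fun z =>
    mul_ne_zero (pow_ne_zero _ (by norm_num)) (Complex.exp_ne_zero _)
  have hfτ : ∀ z, f (z + τ) = A z * f z := fun z => hperτ z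
  let B : ℂ → ℂ := fun z => Complex.exp (-(Real.pi:ℂ) * I * (τ + 2 * z))
  have hBdiff : Differentiable ℂ B := by
    apply Complex.differentiable_exp.comp; fun_prop
  have hB0 : ∀ z, B z ≠ 0 := fun z => Complex.exp_ne_zero _
  have hθlat : ∀ (a b : ℤ), θ (p + ((a:ℂ) + (b:ℂ) * τ)) = 0 := by
    intro a b
    obtain ⟨u, hud, hu0, hrel⟩ := lat_unit hθ1 hBdiff hB0 hθτ a b
    rw [hrel p, hθp, mul_zero]
  have hminv : ∀ (a b : ℤ) (w : ℂ), m (w + ((a:ℂ) + (b:ℂ) * τ)) = m w := by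
    intro a b w
    obtain ⟨u, hud, hu0, hrel⟩ := lat_unit hper1 hAdiff hA0 hfτ a b
    exact order_transfer hf hfne hud hu0 hrel w
  let G : ℂ → ℂ := fun z => ∏ u ∈ Z, θ (z - u + p) ^ (m u)
  have hθsha : ∀ (u w : ℂ), AnalyticAt ℂ (fun z => θ (z - u + p)) w := by
    intro u w
    have h1 : AnalyticAt ℂ (fun z : ℂ => z - u + p) w :=
      ((analyticAt_id).sub analyticAt_const).add analyticAt_const
    exact AnalyticAt.comp (f := fun z : ℂ => z - u + p) (hθa _) h1
  have hθshne : ∀ u : ℂ, ∃ z, θ (z - u + p) ≠ 0 := by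
    intro u
    obtain ⟨z, hz⟩ := hθne
    exact ⟨z + u - p, by rw [show z + u - p - u + p = z by ring]; exact hz⟩
  have hGa : ∀ w, AnalyticAt ℂ G w := fun w =>
    Finset.analyticAt_fun_prod Z (fun u _ => ((hθsha u w).pow _))
  let r : ℂ → ℂ → ℕ := fun u w => (analyticOrderAt (fun z => θ (z - u + p)) w).toNat
  let N : ℂ → ℕ := fun w => ∑ u ∈ Z, r u w * m u
  have hGfac : ∀ w, ∃ γ : ℂ → ℂ, AnalyticAt ℂ γ w ∧ γ w ≠ 0 ∧
      ∀ᶠ z in 𝓝 w, G z = (z - w) ^ (N w) * γ z := by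
    intro w
    have hch : ∀ u : ℂ, ∃ γu : ℂ → ℂ, AnalyticAt ℂ γu w ∧ γu w ≠ 0 ∧
        ∀ᶠ z in 𝓝 w, θ (z - u + p) = (z - w) ^ (r u w) * γu z :=
      fun u => order_factor (fun z => hθsha u z) (hθshne u) w
    choose γu hγa hγ0 hγev using hch
    refine ⟨fun z => ∏ u ∈ Z, γu u z ^ (m u),
      Finset.analyticAt_fun_prod Z (fun u _ => (hγa u).pow _),
      Finset.prod_ne_zero_iff.mpr (fun u _ => pow_ne_zero _ (hγ0 u)), ?_⟩
    have hall : ∀ᶠ z in 𝓝 w, ∀ u ∈ Z, θ (z - u + p) = (z - w) ^ (r u w) * γu u z := by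
      rw [eventually_all_finset]
      exact fun u _ => hγev u
    filter_upwards [hall] with z hz
    calc G z = ∏ u ∈ Z, ((z - w) ^ (r u w) * γu u z) ^ (m u) :=
          Finset.prod_congr rfl (fun u hu => by rw [hz u hu])
      _ = ∏ u ∈ Z, ((z - w) ^ (r u w * m u) * γu u z ^ (m u)) :=
          Finset.prod_congr rfl (fun u hu => by rw [mul_pow, ← pow_mul])
      _ = (z - w) ^ (N w) * ∏ u ∈ Z, γu u z ^ (m u) := by
          rw [Finset.prod_mul_distrib, Finset.prod_pow_eq_pow_sum]
  have hdiv : ∀ w, f w = 0 → m w ≤ N w ∧ 1 ≤ m w := by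
    intro w hw
    obtain ⟨a, b, s, t, hs0, hs1, ht0, ht1, hweq⟩ := lattice_decomp hτ z₀ w
    set w' : ℂ := z₀ + s + t * τ with hw'def
    have hfw' : f w' = 0 := by
      by_contra hcon
      obtain ⟨u, hud, hu0, hrel⟩ := lat_unit hper1 hAdiff hA0 hfτ a b
      rw [hweq, hrel w'] at hw
      exact hcon ((mul_eq_zero.mp hw).resolve_left (hu0 w'))
    have hw'Z : w' ∈ Z := by
      have hmem : w' ∈ {z ∈ fundPar τ z₀ | f z = 0} :=
        ⟨⟨s, t, hs0, hs1, ht0, ht1, rfl⟩, hfw'⟩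
      rw [← hZ] at hmem
      exact_mod_cast hmem
    have hmw : m w = m w' := by rw [hweq]; exact hminv a b w'
    have hr1 : 1 ≤ r w' w := by
      apply order_pos (fun z => hθsha w' z) (hθshne w')
      show θ (w - w' + p) = 0
      rw [hweq, show w' + ((a:ℂ) + (b:ℂ) * τ) - w' + p = p + ((a:ℂ) + (b:ℂ) * τ) by ring]
      exact hθlat a b
    have h1m : 1 ≤ m w := by
      rw [hmw]
      exact order_pos hf hfne w' hfw'
    refine ⟨?_, h1m⟩
    calc m w = 1 * m w' := by rw [hmw, one_mul]
      _ ≤ r w' w * m w' := Nat.mul_le_mul_right _ hr1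
      _ ≤ N w := Finset.single_le_sum (f := fun u => r u w * m u)
            (fun u _ => Nat.zero_le _) hw'Z
  let Q : ℂ → ℂ := fun z => G z / f z
  let h : ℂ → ℂ := fun z => limUnder (𝓝[≠] z) Q
  have hfevne : ∀ w : ℂ, ∀ᶠ z in 𝓝[≠] w, f z ≠ 0 := by
    intro w
    rcases eq_or_ne (f w) 0 with hw | hw
    · obtain ⟨γf, hγfa, hγf0, hγfev⟩ := order_factor hf hfne w
      have hγfne : ∀ᶠ z in 𝓝 w, γf z ≠ 0 := hγfa.continuousAt.eventually_ne hγf0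
      rw [eventually_nhdsWithin_iff]
      filter_upwards [hγfev, hγfne] with z h1 h2 h3
      rw [h1]
      exact mul_ne_zero (pow_ne_zero _ (sub_ne_zero.mpr h3)) h2
    · exact ((hf w).continuousAt.eventually_ne hw).filter_mono nhdsWithin_le_nhds
  have hloc : ∀ w, ∃ φ : ℂ → ℂ, AnalyticAt ℂ φ w ∧ ∀ᶠ z in 𝓝[≠] w, Q z = φ z := by
    intro w
    rcases eq_or_ne (f w) 0 with hw | hw
    · obtain ⟨γf, hγfa, hγf0, hγfev⟩ := order_factor hf hfne w
      obtain ⟨γG, hγGa, hγG0, hγGev⟩ := hGfac w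
      obtain ⟨hle, h1m⟩ := hdiv w hw
      refine ⟨fun z => (z - w) ^ (N w - m w) * (γG z / γf z),
        (((analyticAt_id).sub analyticAt_const).pow _).mul (hγGa.div hγfa hγf0), ?_⟩
      have hγfne : ∀ᶠ z in 𝓝 w, γf z ≠ 0 := hγfa.continuousAt.eventually_ne hγf0
      rw [eventually_nhdsWithin_iff]
      filter_upwards [hγfev, hγGev, hγfne] with z h1 h2 h3 hzw
      have hzw' : (z - w) ≠ 0 := sub_ne_zero.mpr hzw
      show G z / f z = _
      rw [h1, h2, pow_sub₀ _ hzw' hle]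
      field_simp
      rfl
    · exact ⟨Q, (hGa w).div (hf w) hw, Eventually.of_forall (fun z => rfl)⟩
  have hval : ∀ (w : ℂ) (φ : ℂ → ℂ), AnalyticAt ℂ φ w →
      (∀ᶠ z in 𝓝[≠] w, Q z = φ z) → h w = φ w := by
    intro w φ hφa hev
    apply Filter.Tendsto.limUnder_eq
    have h1 : Filter.Tendsto φ (𝓝[≠] w) (𝓝 (φ w)) := hφa.continuousAt.continuousWithinAt
    exact h1.congr' (by filter_upwards [hev] with z hz; exact hz.symm)
  have hQpt : ∀ z, f z ≠ 0 → h z = Q z := by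
    intro z hz
    apply Filter.Tendsto.limUnder_eq
    exact (((hGa z).continuousAt).div ((hf z).continuousAt) hz).continuousWithinAt
  have hha : ∀ w, AnalyticAt ℂ h w := by
    intro w
    obtain ⟨φ, hφa, hev⟩ := hloc w
    have heqw : h w = φ w := hval w φ hφa hev
    have heq : ∀ᶠ z in 𝓝 w, h z = φ z := by
      rw [← nhdsNE_sup_pure w, Filter.eventually_sup]
      constructor
      · filter_upwards [hev, hfevne w] with z h1 h2
        rw [hQpt z h2, h1]
      · simpa using heqw
    exact hφa.congr (Filter.EventuallyEq.symm heq)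
  have hGfh : ∀ z, G z = h z * f z := by
    intro z
    rcases eq_or_ne (f z) 0 with hz | hz
    · rw [hz, mul_zero]
      obtain ⟨γG, hγGa, hγG0, hγGev⟩ := hGfac z
      have h1 := hγGev.self_of_nhds
      have h2 : 1 ≤ N z := le_trans (hdiv z hz).2 (hdiv z hz).1
      rw [h1, sub_self, zero_pow (by omega), zero_mul]
    · rw [hQpt z hz]
      exact (div_mul_cancel₀ _ hz).symm
  have hGne : ∃ z, G z ≠ 0 := by
    have hgen : ∀ s : Finset ℂ, ∃ z, (∏ u ∈ s, θ (z - u + p) ^ (m u)) ≠ 0 := by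
      intro s
      induction s using Finset.induction_on with
      | empty => exact ⟨0, by simp⟩
      | @insert a s ha ih =>
          by_contra hcon
          push_neg at hcon
          have hcon' : ∀ z, θ (z - a + p) ^ (m a) * (∏ u ∈ s, θ (z - u + p) ^ (m u)) = 0 := by
            intro z
            have := hcon z
            rwa [Finset.prod_insert ha] at this
          have hz0 := entire_mul_eq_zero (φ := fun z => θ (z - a + p) ^ (m a))
            (ψ := fun z => ∏ u ∈ s, θ (z - u + p) ^ (m u))
            (fun w => (hθsha a w).pow _)
            (fun w => Finset.analyticAt_fun_prod s (fun u _ => (hθsha u w).pow _))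
            hcon' ih
          obtain ⟨z, hz⟩ := hθshne a
          have hthis : θ (z - a + p) ^ (m a) = 0 := hz0 z
          rcases Nat.eq_zero_or_pos (m a) with hma | hma
          · rw [hma, pow_zero] at hthis; exact one_ne_zero hthis
          · exact hz ((pow_eq_zero_iff hma.ne').mp hthis)
    obtain ⟨z, hz⟩ := hgen Z
    exact ⟨z, hz⟩
  have hhne : ∃ z, h z ≠ 0 := by
    obtain ⟨z, hz⟩ := hGne
    refine ⟨z, fun hcon => hz ?_⟩
    rw [hGfh z, hcon, zero_mul]
  have hG1 : ∀ z, G (z + 1) = G z := by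
    intro z
    apply Finset.prod_congr rfl
    intro u hu
    rw [show z + 1 - u + p = (z - u + p) + 1 by ring, hθ1]
  have hper_h : ∀ z, h (z + 1) = h z := by
    have hsh : ∀ w : ℂ, AnalyticAt ℂ (fun z => h (z + 1)) w := fun w =>
      AnalyticAt.comp (f := fun z : ℂ => z + 1) (hha _) (analyticAt_id.add analyticAt_const)
    have hz0 := entire_mul_eq_zero (φ := fun z => h (z + 1) - h z) (ψ := f)
      (fun w => (hsh w).sub (hha w)) hf ?_ hfne
    · intro z
      have e : h (z + 1) - h z = 0 := hz0 z
      exact sub_eq_zero.mp e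
    · intro z
      have e1 : h (z + 1) * f (z + 1) = G (z + 1) := (hGfh (z + 1)).symm
      rw [hper1 z, hG1 z, hGfh z] at e1
      linear_combination e1
  let S : ℂ := ∑ u ∈ Z, ((m u : ℂ) * u)
  let ν : ℂ := S - c - n * τ
  have hGτ : ∀ z, G (z + τ) = (Complex.exp (2 * Real.pi * I * ν) * A z) * G z := by
    intro z
    have e1 : G (z + τ) =
        (∏ u ∈ Z, Complex.exp (-(Real.pi:ℂ) * I * (τ + 2 * (z - u + p))) ^ (m u)) * G z := by
      show (∏ u ∈ Z, θ (z + τ - u + p) ^ (m u)) = _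
      rw [← Finset.prod_mul_distrib]
      apply Finset.prod_congr rfl
      intro u hu
      rw [show z + τ - u + p = (z - u + p) + τ by ring, hθτ, mul_pow]
    rw [e1]
    congr 1
    have e2 : (∏ u ∈ Z, Complex.exp (-(Real.pi:ℂ) * I * (τ + 2 * (z - u + p))) ^ (m u))
        = Complex.exp (∑ u ∈ Z, (m u : ℂ) * (-(Real.pi:ℂ) * I * (τ + 2 * (z - u + p)))) := by
      rw [Complex.exp_sum]
      apply Finset.prod_congr rfl
      intro u hu
      rw [Complex.exp_nat_mul]
    rw [e2]
    have e5 : (∑ u ∈ Z, ((m u : ℕ) : ℂ)) = (n : ℂ) := by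
      rw [← Nat.cast_sum, hcount]
    have e3 : (∑ u ∈ Z, (m u : ℂ) * (-(Real.pi:ℂ) * I * (τ + 2 * (z - u + p))))
        = -(Real.pi:ℂ) * I * (τ + 2*z + 2*p) * (n:ℂ) + 2 * Real.pi * I * S := by
      rw [Finset.sum_congr rfl (fun u (hu : u ∈ Z) =>
        (by ring : (m u : ℂ) * (-(Real.pi:ℂ) * I * (τ + 2 * (z - u + p)))
          = -(Real.pi:ℂ) * I * (τ + 2*z + 2*p) * (m u : ℂ) + 2 * Real.pi * I * ((m u : ℂ) * u)))]
      rw [Finset.sum_add_distrib, ← Finset.mul_sum, ← Finset.mul_sum, e5]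
    rw [e3]
    have e6 : -(Real.pi:ℂ) * I * (τ + 2*z + 2*p) * (n:ℂ) + 2 * Real.pi * I * S
        = (2 * Real.pi * I * ν + ((Real.pi:ℂ) * I * n + (-2 * Real.pi * I * ((n:ℂ) * z - c))))
          + ((-(n:ℤ) : ℤ) : ℂ) * (2 * Real.pi * I) := by
      show -(Real.pi:ℂ) * I * (τ + 2*z + 2*((1 + τ)/2)) * (n:ℂ) + 2 * Real.pi * I * S
        = (2 * Real.pi * I * (S - c - n * τ) + ((Real.pi:ℂ) * I * n
            + (-2 * Real.pi * I * ((n:ℂ) * z - c)))) + ((-(n:ℤ) : ℤ) : ℂ) * (2 * Real.pi * I)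
      push_cast
      ring
    rw [e6, Complex.exp_add, Complex.exp_add, Complex.exp_int_mul_two_pi_mul_I]
    have e7 : Complex.exp ((Real.pi:ℂ) * I * n + (-2 * Real.pi * I * ((n:ℂ) * z - c))) = A z := by
      rw [Complex.exp_add]
      show _ = (-1:ℂ)^n * Complex.exp (-2 * Real.pi * I * ((n:ℂ) * z - c))
      congr 1
      rw [show (Real.pi:ℂ) * I * n = (n : ℕ) * ((Real.pi:ℂ) * I) by push_cast; ring,
        Complex.exp_nat_mul, Complex.exp_pi_mul_I]
    rw [e7, mul_one]
  have hqh : ∀ z, h (z + τ) = Complex.exp (2 * Real.pi * I * ν) * h z := by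
    have hsh : ∀ w : ℂ, AnalyticAt ℂ (fun z => h (z + τ)) w := fun w =>
      AnalyticAt.comp (f := fun z : ℂ => z + τ) (hha _) (analyticAt_id.add analyticAt_const)
    have hAa : ∀ w, AnalyticAt ℂ A w := fun w => hAdiff.analyticAt w
    have hz0 := entire_mul_eq_zero
      (φ := fun z => h (z + τ) * A z - Complex.exp (2 * Real.pi * I * ν) * A z * h z) (ψ := f)
      (fun w => ((hsh w).mul (hAa w)).sub ((analyticAt_const.mul (hAa w)).mul (hha w)))
      hf ?_ hfne
    · intro z
      have e : h (z + τ) * A z - Complex.exp (2 * Real.pi * I * ν) * A z * h z = 0 := hz0 z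
      have e2 : h (z + τ) * A z = Complex.exp (2 * Real.pi * I * ν) * h z * A z := by
        linear_combination e
      exact mul_right_cancel₀ (hA0 z) e2
    · intro z
      have e1 : h (z + τ) * f (z + τ) = G (z + τ) := (hGfh _).symm
      rw [hfτ z, hGτ z, hGfh z] at e1
      linear_combination e1
  obtain ⟨a, b, hab⟩ := claimB hτ hha hhne hper_h hqh
  refine ⟨a, b + n, ?_⟩
  have hgoal : (∑ z ∈ Z, ((analyticOrderAt f z).toNat : ℂ) * z) = S := rfl
  rw [hgoal]
  have hab' : S - c - (n:ℂ) * τ = (a:ℂ) + (b:ℂ) * τ := hab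
  push_cast
  linear_combination hab'
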